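/- Let B be a Boolean algebra. Then B is atomless (has no atoms) if and only if for all finite Boolean algebras C and D, every injective bounded lattice homomorphism f : C → D and every injective bounded lattice homomorphism χ : C → B admit an injective bounded lattice homomorphism u : D → B with u ∘ f = χ. -/

import Mathlib

universe u

section ULiftInstances

instance ULift.instTop' {α : Type*} [Top α] : Top (ULift α) := ⟨⟨⊤⟩⟩
instance ULift.instBot' {α : Type*} [Bot α] : Bot (ULift α) := ⟨⟨⊥⟩⟩
instance ULift.instHImp' {α : Type*} [HImp α] : HImp (ULift α) :=
  ⟨fun a b => ⟨a.down ⇨ b.down⟩⟩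

instance ULift.instBooleanAlgebra {α : Type*} [BooleanAlgebra α] :
    BooleanAlgebra (ULift α) :=
  Function.Injective.booleanAlgebra ULift.down ULift.down_injective
    Iff.rfl Iff.rfl (fun _ _ => rfl) (fun _ _ => rfl) rfl rfl (fun _ => rfl) (fun _ _ => rfl) (fun _ _ => rfl)

end ULiftInstances

section Aux

variable {B : Type*} [BooleanAlgebra B]

/-- In an atomless Boolean algebra, any nonzero element can be partitioned into
nonzero pairwise-disjoint pieces indexed by any nonempty finite set. -/
private lemma exists_partition (hB : ∀ b : B, ¬ IsAtom b) {D : Type*} [DecidableEq D]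
    (s : Finset D) (hs : s.Nonempty) : ∀ b : B, b ≠ ⊥ →
    ∃ g : D → B, (∀ d ∈ s, g d ≠ ⊥) ∧ (∀ d ∈ s, ∀ d' ∈ s, d ≠ d' → g d ⊓ g d' = ⊥) ∧
      s.sup g = b := by
  classical
  induction s using Finset.induction_on with
  | empty => exact absurd hs (by simp)
  | @insert d s hd ih =>
    intro b hb
    rcases s.eq_empty_or_nonempty with rfl | hs'
    · exact ⟨fun _ => b, by simpa using hb, by simp, by simp⟩
    · obtain ⟨x, hx1, hx2⟩ : ∃ x, x ≠ ⊥ ∧ x < b := by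
        have := hB b
        simp only [IsAtom, not_and, not_forall] at this
        obtain ⟨x, hxb, hx⟩ := this hb
        exact ⟨x, hx, hxb⟩
      have hy : b \ x ≠ ⊥ := by
        rw [Ne, sdiff_eq_bot_iff]
        exact fun h => absurd (le_antisymm hx2.le h) hx2.ne
      obtain ⟨g', hg1, hg2, hg3⟩ := ih hs' (b \ x) hy
      refine ⟨fun e => if e = d then x else g' e, ?_, ?_, ?_⟩
      · intro e he
        rcases Finset.mem_insert.mp he with rfl | he
        · simpa using hx1
        · have : e ≠ d := fun h => hd (h ▸ he)
          simpa [this] using hg1 e he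
      · intro e he e' he' hne
        rcases Finset.mem_insert.mp he with he0 | he0 <;>
          rcases Finset.mem_insert.mp he' with he0' | he0'
        · exact absurd (he0.trans he0'.symm) hne
        · have h1 : e' ≠ d := fun h => hd (h ▸ he0')
          have h2 : g' e' ≤ b \ x := by rw [← hg3]; exact Finset.le_sup he0'
          simp only [if_pos he0, if_neg h1]
          exact le_bot_iff.mp (le_trans (inf_le_inf_left x h2)
            (le_of_eq inf_sdiff_self_right))
        · have h1 : e ≠ d := fun h => hd (h ▸ he0)
          have h2 : g' e ≤ b \ x := by rw [← hg3]; exact Finset.le_sup he0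
          simp only [if_neg h1, if_pos he0']
          exact le_bot_iff.mp (le_trans (inf_le_inf_right x h2)
            (le_of_eq inf_sdiff_self_left))
        · have h1 : e ≠ d := fun h => hd (h ▸ he0)
          have h2 : e' ≠ d := fun h => hd (h ▸ he0')
          simpa [h1, h2] using hg2 e he0 e' he0' hne
      · rw [Finset.sup_insert, if_pos rfl]
        have : s.sup (fun e => if e = d then x else g' e) = s.sup g' := by
          apply Finset.sup_congr rfl
          intro e he
          have : e ≠ d := fun h => hd (h ▸ he)
          simp [this]
        rw [this, hg3, sup_sdiff_cancel_right hx2.le]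

/-- In a finite Boolean algebra, every element is the sup of the atoms below it. -/
private lemma sup_atoms_eq {L : Type*} [BooleanAlgebra L] [Finite L] (x : L)
    (s : Finset L) (hmem : ∀ a, a ∈ s ↔ IsAtom a ∧ a ≤ x) : s.sup id = x := by
  apply le_antisymm (Finset.sup_le fun a ha => ((hmem a).1 ha).2)
  by_contra h
  have hne : x \ s.sup id ≠ ⊥ := by
    rw [Ne, sdiff_eq_bot_iff]; exact h
  obtain ⟨a, ha, hle⟩ := (eq_bot_or_exists_atom_le (x \ s.sup id)).resolve_left hne
  have hax : a ≤ x := hle.trans sdiff_le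
  have hmem' : a ∈ s := (hmem a).2 ⟨ha, hax⟩
  have h1 : a ≤ s.sup id := Finset.le_sup (f := id) hmem'
  have h2 : a ≤ (s.sup id)ᶜ := hle.trans (by rw [sdiff_eq]; exact inf_le_right)
  exact ha.1 (le_bot_iff.mp (by calc a ≤ s.sup id ⊓ (s.sup id)ᶜ := le_inf h1 h2
                                  _ = ⊥ := inf_compl_eq_bot))

/-- An atom below a finite sup is below one of the terms. -/
private lemma atom_le_sup {L M : Type*} [BooleanAlgebra L] {d : L} (hd : IsAtom d)
    (s : Finset M) (g : M → L) (h : d ≤ s.sup g) : ∃ a ∈ s, d ≤ g a := by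
  classical
  induction s using Finset.induction_on with
  | empty => exact absurd (le_bot_iff.mp (by simpa using h)) hd.1
  | @insert a s ha ih =>
    rw [Finset.sup_insert] at h
    have hsplit : d ⊓ g a ⊔ d ⊓ s.sup g = d := by
      rw [← inf_sup_left, inf_eq_left.mpr h]
    rcases hd.le_iff.mp (inf_le_left : d ⊓ g a ≤ d) with h1 | h1
    · rcases hd.le_iff.mp (inf_le_left : d ⊓ s.sup g ≤ d) with h2 | h2
      · rw [h1, h2, sup_idem] at hsplit
        exact absurd hsplit.symm hd.1
      · obtain ⟨b, hb, hble⟩ := ih (by rw [← h2]; exact inf_le_right)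
        exact ⟨b, Finset.mem_insert_of_mem hb, hble⟩
    · exact ⟨a, Finset.mem_insert_self a s, by rw [← h1]; exact inf_le_right⟩

/-- Sups of pairwise-disjoint families multiply like intersections. -/
private lemma sup_inf_sup_of_disjoint {L M : Type*} [BooleanAlgebra L] [DecidableEq M]
    (g : M → L) (s t : Finset M)
    (hdisj : ∀ a ∈ s, ∀ b ∈ t, a ≠ b → g a ⊓ g b = ⊥) :
    s.sup g ⊓ t.sup g = (s ∩ t).sup g := by
  apply le_antisymm
  · rw [Finset.sup_inf_distrib_left]
    refine Finset.sup_le fun b hb => ?_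
    rw [Finset.sup_inf_distrib_right]
    refine Finset.sup_le fun a ha => ?_
    by_cases hab : a = b
    · subst hab
      exact le_trans inf_le_left (Finset.le_sup (Finset.mem_inter.mpr ⟨ha, hb⟩))
    · exact le_trans (le_of_eq (hdisj a ha b hb hab)) bot_le
  · refine Finset.sup_le fun a ha => ?_
    obtain ⟨h1, h2⟩ := Finset.mem_inter.mp ha
    exact le_inf (Finset.le_sup h1) (Finset.le_sup h2)

private lemma map_fsup {α β γ : Type*} [Lattice α] [BoundedOrder α] [Lattice β]
    [BoundedOrder β] (f : BoundedLatticeHom α β) (s : Finset γ) (g : γ → α) :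
    f (s.sup g) = s.sup (fun i => f (g i)) := by
  classical
  induction s using Finset.induction_on with
  | empty => simp
  | @insert a s ha ih => simp [ih]

end Aux

/-- A Boolean algebra is atomless if and only if it is homogeneous with respect to
injective bounded lattice homomorphisms from finite Boolean algebras: for all
finite Boolean algebras `C`, `D`, every injective bounded lattice homomorphism
`f : C → D` and every injective bounded lattice homomorphism `χ : C → B` admit an
injective bounded lattice homomorphism `u : D → B` with `u ∘ f = χ`. -/
theorem atomless_iff_homogeneous (B : Type u) [BooleanAlgebra B] :
    (∀ b : B, ¬ IsAtom b) ↔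
      ∀ (C D : Type u) [BooleanAlgebra C] [BooleanAlgebra D] [Finite C] [Finite D],
        ∀ (f : BoundedLatticeHom C D) (χ : BoundedLatticeHom C B),
          Function.Injective f → Function.Injective χ →
            ∃ u : BoundedLatticeHom D B,
              Function.Injective u ∧ ∀ c, u (f c) = χ c := by
  classical
  constructor
  · -- atomless implies homogeneous
    intro hB C D _ _ _ _ f χ hf hχ
    haveI : Fintype C := Fintype.ofFinite C
    haveI : Fintype D := Fintype.ofFinite D
    have hfbot : ∀ c : C, f c = ⊥ → c = ⊥ := fun c h => hf (h.trans (map_bot f).symm)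
    have hχbot : ∀ c : C, χ c = ⊥ → c = ⊥ := fun c h => hχ (h.trans (map_bot χ).symm)
    set AC : C → Finset C := fun x => Finset.univ.filter (fun a => IsAtom a ∧ a ≤ x)
      with hACdef
    set AD : D → Finset D := fun x => Finset.univ.filter (fun a => IsAtom a ∧ a ≤ x)
      with hADdef
    have hACmem : ∀ x a, a ∈ AC x ↔ IsAtom a ∧ a ≤ x := by
      intro x a; simp [hACdef]
    have hADmem : ∀ x a, a ∈ AD x ↔ IsAtom a ∧ a ≤ x := by
      intro x a; simp [hADdef]
    have hsupC : ∀ x : C, (AC x).sup id = x := fun x => sup_atoms_eq x _ (hACmem x)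
    have hsupD : ∀ x : D, (AD x).sup id = x := fun x => sup_atoms_eq x _ (hADmem x)
    -- the projection from atoms of D to atoms of C
    have hπex : ∀ d : D, ∃ c : C, IsAtom d → (IsAtom c ∧ d ≤ f c) := by
      intro d
      by_cases hd : IsAtom d
      · have h1 : d ≤ (AC ⊤).sup (fun c => f c) := by
          have : f ((AC ⊤).sup id) = (AC ⊤).sup (fun c => f c) := map_fsup f _ _
          rw [hsupC ⊤, map_top] at this
          rw [← this]; exact le_top
        obtain ⟨c, hc, hcle⟩ := atom_le_sup hd _ _ h1
        exact ⟨c, fun _ => ⟨((hACmem ⊤ c).1 hc).1, hcle⟩⟩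
      · exact ⟨⊥, fun h => absurd h hd⟩
    choose π hπ using hπex
    have hπuniq : ∀ d : D, IsAtom d → ∀ c : C, IsAtom c → d ≤ f c → c = π d := by
      intro d hd c hc hle
      by_contra hne
      have hdisj0 : Disjoint c (π d) := hc.disjoint_of_ne (hπ d hd).1 hne
      have hdisj : c ⊓ π d = ⊥ := disjoint_iff.mp hdisj0
      have : d ≤ f (c ⊓ π d) := by
        rw [map_inf]; exact le_inf hle (hπ d hd).2
      rw [hdisj, map_bot] at this
      exact hd.1 (le_bot_iff.mp this)
    -- partition χ c into pieces indexed by the atoms of D below f c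
    have hgex : ∀ c : C, ∃ g : D → B, IsAtom c →
        ((∀ d ∈ AD (f c), g d ≠ ⊥) ∧
          (∀ d ∈ AD (f c), ∀ d' ∈ AD (f c), d ≠ d' → g d ⊓ g d' = ⊥) ∧
          (AD (f c)).sup g = χ c) := by
      intro c
      by_cases hc : IsAtom c
      · have hfc : f c ≠ ⊥ := fun h => hc.1 (hfbot c h)
        obtain ⟨d, hd, hdle⟩ := (eq_bot_or_exists_atom_le (f c)).resolve_left hfc
        have hne : (AD (f c)).Nonempty := ⟨d, (hADmem _ d).2 ⟨hd, hdle⟩⟩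
        have hχc : χ c ≠ ⊥ := fun h => hc.1 (hχbot c h)
        obtain ⟨g, h1, h2, h3⟩ := exists_partition hB _ hne (χ c) hχc
        exact ⟨g, fun _ => ⟨h1, h2, h3⟩⟩
      · exact ⟨fun _ => ⊥, fun h => absurd h hc⟩
    choose gF hgF using hgex
    set G : D → B := fun d => gF (π d) d with hGdef
    have hGmem : ∀ d : D, IsAtom d → d ∈ AD (f (π d)) :=
      fun d hd => (hADmem _ d).2 ⟨hd, (hπ d hd).2⟩
    have hGne : ∀ d : D, IsAtom d → G d ≠ ⊥ :=
      fun d hd => (hgF (π d) (hπ d hd).1).1 d (hGmem d hd)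
    have hGsum : ∀ c : C, IsAtom c → (AD (f c)).sup G = χ c := by
      intro c hc
      rw [← (hgF c hc).2.2]
      apply Finset.sup_congr rfl
      intro d hd
      obtain ⟨hda, hdle⟩ := (hADmem _ d).1 hd
      have : c = π d := hπuniq d hda c hc hdle
      rw [hGdef]; simp only; rw [← this]
    have hGle : ∀ d : D, IsAtom d → G d ≤ χ (π d) := by
      intro d hd
      rw [← hGsum (π d) (hπ d hd).1]
      exact Finset.le_sup (hGmem d hd)
    have hGdis : ∀ d d' : D, IsAtom d → IsAtom d' → d ≠ d' → G d ⊓ G d' = ⊥ := by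
      intro d d' hd hd' hne
      by_cases hπeq : π d = π d'
      · have h1 : d' ∈ AD (f (π d)) := hπeq ▸ hGmem d' hd'
        have := (hgF (π d) (hπ d hd).1).2.1 d (hGmem d hd) d' h1 hne
        rw [hGdef]; simp only; rw [hπeq]
        have h2 := (hgF (π d') ((hπeq ▸ (hπ d hd).1))).2.1 d (hπeq ▸ hGmem d hd) d'
          (hGmem d' hd') hne
        exact h2
      · have hdisj : π d ⊓ π d' = ⊥ :=
          disjoint_iff.mp ((hπ d hd).1.disjoint_of_ne (hπ d' hd').1 hπeq)
        have : G d ⊓ G d' ≤ χ (π d) ⊓ χ (π d') :=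
          inf_le_inf (hGle d hd) (hGle d' hd')
        rw [← map_inf, hdisj, map_bot] at this
        exact le_bot_iff.mp this
    set u0 : D → B := fun x => (AD x).sup G with hu0def
    -- computation rules
    have hADbot : AD (⊥ : D) = ∅ := by
      apply Finset.eq_empty_of_forall_notMem
      intro a ha
      obtain ⟨h1, h2⟩ := (hADmem ⊥ a).1 ha
      exact h1.1 (le_bot_iff.mp h2)
    have hu_bot : u0 ⊥ = ⊥ := by rw [hu0def]; simp only; rw [hADbot]; simp
    have hADsup : ∀ x y : D, AD (x ⊔ y) = AD x ∪ AD y := by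
      intro x y
      ext a
      simp only [hADmem, Finset.mem_union]
      constructor
      · rintro ⟨ha, hle⟩
        have hsplit : a ⊓ x ⊔ a ⊓ y = a := by
          rw [← inf_sup_left, inf_eq_left.mpr hle]
        rcases ha.le_iff.mp (inf_le_left : a ⊓ x ≤ a) with h1 | h1
        · rcases ha.le_iff.mp (inf_le_left : a ⊓ y ≤ a) with h2 | h2
          · rw [h1, h2, sup_idem] at hsplit
            exact absurd hsplit.symm ha.1
          · exact Or.inr ⟨ha, by rw [← h2]; exact inf_le_right⟩
        · exact Or.inl ⟨ha, by rw [← h1]; exact inf_le_right⟩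
      · rintro (⟨ha, hle⟩ | ⟨ha, hle⟩)
        · exact ⟨ha, hle.trans le_sup_left⟩
        · exact ⟨ha, hle.trans le_sup_right⟩
    have hu_sup : ∀ x y : D, u0 (x ⊔ y) = u0 x ⊔ u0 y := by
      intro x y
      rw [hu0def]; simp only
      rw [hADsup, Finset.sup_union]
    have hADinf : ∀ x y : D, AD (x ⊓ y) = AD x ∩ AD y := by
      intro x y
      ext a
      simp only [hADmem, Finset.mem_inter, le_inf_iff]
      tauto
    have hu_inf : ∀ x y : D, u0 (x ⊓ y) = u0 x ⊓ u0 y := by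
      intro x y
      rw [hu0def]; simp only
      rw [hADinf]
      refine (sup_inf_sup_of_disjoint G _ _ ?_).symm
      intro a ha b hb hab
      exact hGdis a b ((hADmem x a).1 ha).1 ((hADmem y b).1 hb).1 hab
    -- compatibility with f and χ
    have hcomp : ∀ c' : C, u0 (f c') = χ c' := by
      intro c'
      have hbiU : AD (f c') = (AC c').biUnion (fun c => AD (f c)) := by
        ext d
        simp only [Finset.mem_biUnion]
        constructor
        · intro hd
          obtain ⟨hda, hdle⟩ := (hADmem _ d).1 hd
          refine ⟨π d, ?_, hGmem d hda⟩
          have h1 : d ≤ f (π d ⊓ c') := by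
            rw [map_inf]; exact le_inf (hπ d hda).2 hdle
          have h2 : π d ⊓ c' = π d := by
            rcases (hπ d hda).1.le_iff.mp (inf_le_left : π d ⊓ c' ≤ π d) with h | h
            · rw [h, map_bot] at h1
              exact absurd (le_bot_iff.mp h1) hda.1
            · exact h
          exact (hACmem c' (π d)).2 ⟨(hπ d hda).1, inf_eq_left.mp h2⟩
        · rintro ⟨c, hc, hd⟩
          obtain ⟨hca, hcle⟩ := (hACmem c' c).1 hc
          obtain ⟨hda, hdle⟩ := (hADmem _ d).1 hd
          exact (hADmem _ d).2 ⟨hda, hdle.trans (OrderHomClass.mono f hcle)⟩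
      rw [hu0def]; simp only
      rw [hbiU, Finset.sup_biUnion]
      have h1 : (AC c').sup (fun c => (AD (f c)).sup G) = (AC c').sup (fun c => χ (id c)) := by
        apply Finset.sup_congr rfl
        intro c hc
        exact hGsum c ((hACmem c' c).1 hc).1
      rw [h1, ← map_fsup χ _ id, hsupC]
    have hu_top : u0 ⊤ = ⊤ := by
      have := hcomp ⊤
      rw [map_top, map_top] at this
      exact this
    -- injectivity
    have hkey : ∀ x y : D, ¬ x ≤ y → ¬ u0 x ≤ u0 y := by
      intro x y hxy hle
      have hne : x \ y ≠ ⊥ := by rw [Ne, sdiff_eq_bot_iff]; exact hxy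
      obtain ⟨d, hd, hdle⟩ := (eq_bot_or_exists_atom_le (x \ y)).resolve_left hne
      have hdx : d ≤ x := hdle.trans sdiff_le
      have hdyc : d ≤ yᶜ := hdle.trans (by rw [sdiff_eq]; exact inf_le_right)
      have h1 : G d ≤ u0 x := Finset.le_sup ((hADmem x d).2 ⟨hd, hdx⟩)
      have h2 : G d ⊓ u0 y = ⊥ := by
        rw [hu0def]; simp only
        rw [Finset.sup_inf_distrib_left]
        refine le_bot_iff.mp (Finset.sup_le fun d' hd' => ?_)
        obtain ⟨hd'a, hd'le⟩ := (hADmem y d').1 hd'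
        have hne' : d ≠ d' := by
          rintro rfl
          exact hd.1 (le_bot_iff.mp (by
            calc d ≤ y ⊓ yᶜ := le_inf hd'le hdyc
              _ = ⊥ := inf_compl_eq_bot))
        exact (hGdis d d' hd hd'a hne').le
      have : G d = ⊥ := by
        have := le_inf (le_refl (G d)) (h1.trans hle)
        rw [h2] at this
        exact le_bot_iff.mp this
      exact hGne d hd this
    have hinj : Function.Injective u0 := by
      intro x y h
      by_contra hne
      by_cases hxy : x ≤ y
      · by_cases hyx : y ≤ x
        · exact hne (le_antisymm hxy hyx)
        · exact hkey y x hyx h.ge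
      · exact hkey x y hxy h.le
    refine ⟨⟨⟨⟨u0, hu_sup⟩, hu_inf⟩, hu_top, hu_bot⟩, hinj, hcomp⟩
  · -- homogeneous implies atomless
    intro H b hb
    have hbne : b ≠ ⊥ := hb.1
    have hbot_ne_top : (⊥ : B) ≠ ⊤ := by
      intro h
      exact hbne (le_bot_iff.mp (le_top.trans h.ge))
    by_cases hbc : bᶜ = ⊥
    · -- b = ⊤, so B = {⊥, ⊤}; use the embedding 2 → 4
      have hbtop : b = ⊤ := compl_eq_bot.mp hbc
      set C := ULift.{u} Bool with hC
      set D := ULift.{u} (Bool × Bool) with hD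
      set f : BoundedLatticeHom C D :=
        ⟨⟨⟨fun x => ⟨(x.down, x.down)⟩, fun _ _ => rfl⟩, fun _ _ => rfl⟩, rfl, rfl⟩
        with hfdef
      have hχsup : ∀ a c : C, (cond (a ⊔ c).down (⊤ : B) ⊥) =
          cond a.down ⊤ ⊥ ⊔ cond c.down ⊤ ⊥ := by
        rintro ⟨p⟩ ⟨q⟩
        show cond (p || q) (⊤ : B) ⊥ = cond p ⊤ ⊥ ⊔ cond q ⊤ ⊥
        cases p <;> cases q <;> simp
      have hχinf : ∀ a c : C, (cond (a ⊓ c).down (⊤ : B) ⊥) =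
          cond a.down ⊤ ⊥ ⊓ cond c.down ⊤ ⊥ := by
        rintro ⟨p⟩ ⟨q⟩
        show cond (p && q) (⊤ : B) ⊥ = cond p ⊤ ⊥ ⊓ cond q ⊤ ⊥
        cases p <;> cases q <;> simp
      set χ : BoundedLatticeHom C B :=
        ⟨⟨⟨fun x => cond x.down ⊤ ⊥, hχsup⟩, hχinf⟩, rfl, rfl⟩ with hχdef
      have hfinj : Function.Injective f := by
        intro a b h
        exact ULift.down_injective (congrArg (fun z : D => z.down.1) h)
      have hχinj : Function.Injective χ := by
        rintro ⟨p⟩ ⟨q⟩ h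
        cases p <;> cases q <;> first
          | rfl
          | (exact absurd h hbot_ne_top.symm)
          | (exact absurd h hbot_ne_top)
      obtain ⟨u, hu, hcomp⟩ := H C D f χ hfinj hχinj
      set e : B := u ⟨(true, false)⟩ with he
      set e' : B := u ⟨(false, true)⟩ with he'
      have hsup : e ⊔ e' = ⊤ := by
        rw [he, he', ← map_sup]
        have h1 : (⟨(true, false)⟩ : D) ⊔ ⟨(false, true)⟩ = ⊤ := rfl
        rw [h1, map_top]
      have hinf : e ⊓ e' = ⊥ := by
        rw [he, he', ← map_inf]
        have h1 : (⟨(true, false)⟩ : D) ⊓ ⟨(false, true)⟩ = ⊥ := rfl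
        rw [h1, map_bot]
      have hene : e ≠ ⊥ := by
        intro h
        have : (⟨(true, false)⟩ : D) = ⊥ := hu (by rw [map_bot, ← he]; exact h)
        simpa using congrArg (fun z : D => z.down.1) this
      have he'ne : e' ≠ ⊥ := by
        intro h
        have : (⟨(false, true)⟩ : D) = ⊥ := hu (by rw [map_bot, ← he']; exact h)
        simpa using congrArg (fun z : D => z.down.2) this
      have hetop : e ≠ ⊤ := by
        intro h
        apply he'ne
        calc e' = e' ⊓ ⊤ := by rw [inf_top_eq]
          _ = e' ⊓ e := by rw [h]
          _ = ⊥ := by rw [inf_comm]; exact hinf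
      exact hene (hb.2 e (by rw [hbtop]; exact lt_top_iff_ne_top.mpr hetop))
    · -- bᶜ ≠ ⊥; use the embedding 4 → 8 splitting the atom b
      set C := ULift.{u} (Bool × Bool) with hC
      set D := ULift.{u} (Bool × Bool × Bool) with hD
      set f : BoundedLatticeHom C D :=
        ⟨⟨⟨fun x => ⟨(x.down.1, x.down.1, x.down.2)⟩, fun _ _ => rfl⟩, fun _ _ => rfl⟩,
          rfl, rfl⟩ with hfdef
      have hcondb : ∀ p : Bool, cond p b ⊥ ≤ b := by intro p; cases p <;> simp
      have hcondbc : ∀ p : Bool, cond p bᶜ ⊥ ≤ bᶜ := by intro p; cases p <;> simp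
      have cross : ∀ a1 a1' a2 a2' : B, a1 ≤ b → a1' ≤ b → a2 ≤ bᶜ → a2' ≤ bᶜ →
          (a1 ⊔ a2) ⊓ (a1' ⊔ a2') = (a1 ⊓ a1') ⊔ (a2 ⊓ a2') := by
        intro a1 a1' a2 a2' h1 h1' h2 h2'
        have hx : a1 ⊓ a2' = ⊥ :=
          le_bot_iff.mp ((inf_le_inf h1 h2').trans (by simp))
        have hy : a2 ⊓ a1' = ⊥ :=
          le_bot_iff.mp ((inf_le_inf h2 h1').trans (by simp [inf_comm]))
        rw [inf_sup_left, inf_sup_right, inf_sup_right, hx, hy]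
        simp [sup_assoc]
      have hχ0sup : ∀ x y : C, (cond (x ⊔ y).down.1 b ⊥ ⊔ cond (x ⊔ y).down.2 bᶜ ⊥) =
          (cond x.down.1 b ⊥ ⊔ cond x.down.2 bᶜ ⊥) ⊔
            (cond y.down.1 b ⊥ ⊔ cond y.down.2 bᶜ ⊥) := by
        rintro ⟨p, q⟩ ⟨p', q'⟩
        show cond (p || p') b ⊥ ⊔ cond (q || q') bᶜ ⊥ =
          (cond p b ⊥ ⊔ cond q bᶜ ⊥) ⊔ (cond p' b ⊥ ⊔ cond q' bᶜ ⊥)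
        have h1 : cond (p || p') b ⊥ = cond p b ⊥ ⊔ cond p' b ⊥ := by
          cases p <;> cases p' <;> simp
        have h2 : cond (q || q') bᶜ ⊥ = cond q bᶜ ⊥ ⊔ cond q' bᶜ ⊥ := by
          cases q <;> cases q' <;> simp
        rw [h1, h2, sup_sup_sup_comm]
      have hχ0inf : ∀ x y : C, (cond (x ⊓ y).down.1 b ⊥ ⊔ cond (x ⊓ y).down.2 bᶜ ⊥) =
          (cond x.down.1 b ⊥ ⊔ cond x.down.2 bᶜ ⊥) ⊓
            (cond y.down.1 b ⊥ ⊔ cond y.down.2 bᶜ ⊥) := by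
        rintro ⟨p, q⟩ ⟨p', q'⟩
        show cond (p && p') b ⊥ ⊔ cond (q && q') bᶜ ⊥ =
          (cond p b ⊥ ⊔ cond q bᶜ ⊥) ⊓ (cond p' b ⊥ ⊔ cond q' bᶜ ⊥)
        rw [cross _ _ _ _ (hcondb p) (hcondb p') (hcondbc q) (hcondbc q')]
        have h1 : cond (p && p') b ⊥ = cond p b ⊥ ⊓ cond p' b ⊥ := by
          cases p <;> cases p' <;> simp
        have h2 : cond (q && q') bᶜ ⊥ = cond q bᶜ ⊥ ⊓ cond q' bᶜ ⊥ := by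
          cases q <;> cases q' <;> simp
        rw [h1, h2]
      have hχ0top : (cond (⊤ : C).down.1 b ⊥ ⊔ cond (⊤ : C).down.2 bᶜ ⊥) = ⊤ := by
        show b ⊔ bᶜ = ⊤
        exact sup_compl_eq_top
      have hχ0bot : (cond (⊥ : C).down.1 b ⊥ ⊔ cond (⊥ : C).down.2 bᶜ ⊥) = ⊥ := by
        show (⊥ : B) ⊔ ⊥ = ⊥
        simp
      set χ : BoundedLatticeHom C B :=
        ⟨⟨⟨fun x => cond x.down.1 b ⊥ ⊔ cond x.down.2 bᶜ ⊥, hχ0sup⟩, hχ0inf⟩,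
          hχ0top, hχ0bot⟩ with hχdef
      have hfinj : Function.Injective f := by
        intro a c h
        have h1 := congrArg (fun z : D => z.down.1) h
        have h2 := congrArg (fun z : D => z.down.2.2) h
        exact ULift.down_injective (Prod.ext h1 h2)
      have hχval : ∀ p q : Bool, χ ⟨(p, q)⟩ = cond p b ⊥ ⊔ cond q bᶜ ⊥ := fun _ _ => rfl
      have hinfb : ∀ p q : Bool, χ ⟨(p, q)⟩ ⊓ b = cond p b ⊥ := by
        intro p q
        rw [hχval, inf_sup_right]
        have h1 : cond p b ⊥ ⊓ b = cond p b ⊥ := inf_eq_left.mpr (hcondb p)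
        have h2 : cond q bᶜ ⊥ ⊓ b = ⊥ :=
          le_bot_iff.mp ((inf_le_inf (hcondbc q) le_rfl).trans (by simp [inf_comm]))
        rw [h1, h2, sup_bot_eq]
      have hinfbc : ∀ p q : Bool, χ ⟨(p, q)⟩ ⊓ bᶜ = cond q bᶜ ⊥ := by
        intro p q
        rw [hχval, inf_sup_right]
        have h1 : cond q bᶜ ⊥ ⊓ bᶜ = cond q bᶜ ⊥ := inf_eq_left.mpr (hcondbc q)
        have h2 : cond p b ⊥ ⊓ bᶜ = ⊥ :=
          le_bot_iff.mp ((inf_le_inf (hcondb p) le_rfl).trans (by simp))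
        rw [h1, h2, bot_sup_eq]
      have hχinj : Function.Injective χ := by
        rintro ⟨p, q⟩ ⟨p', q'⟩ h
        have hb1 : cond p b ⊥ = cond p' b ⊥ := by
          rw [← hinfb p q, ← hinfb p' q', h]
        have hb2 : cond q bᶜ ⊥ = cond q' bᶜ ⊥ := by
          rw [← hinfbc p q, ← hinfbc p' q', h]
        have hpp : p = p' := by
          cases p <;> cases p' <;> first
            | rfl
            | (exact absurd hb1 hbne)
            | (exact absurd hb1 (Ne.symm hbne))
        have hqq : q = q' := by
          cases q <;> cases q' <;> first
            | rfl
            | (exact absurd hb2 hbc)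
            | (exact absurd hb2 (Ne.symm hbc))
        rw [hpp, hqq]
      obtain ⟨u, hu, hcomp⟩ := H C D f χ hfinj hχinj
      set x : B := u ⟨(true, false, false)⟩ with hx
      set y : B := u ⟨(false, true, false)⟩ with hy
      have hsup : x ⊔ y = b := by
        rw [hx, hy, ← map_sup]
        have h1 : (⟨(true, false, false)⟩ : D) ⊔ ⟨(false, true, false)⟩ =
            f ⟨(true, false)⟩ := rfl
        rw [h1, hcomp]
        show cond true b ⊥ ⊔ cond false bᶜ ⊥ = b
        simp
      have hinf : x ⊓ y = ⊥ := by
        rw [hx, hy, ← map_inf]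
        have h1 : (⟨(true, false, false)⟩ : D) ⊓ ⟨(false, true, false)⟩ = ⊥ := rfl
        rw [h1, map_bot]
      have hxne : x ≠ ⊥ := by
        intro h
        have : (⟨(true, false, false)⟩ : D) = ⊥ := hu (by rw [map_bot, ← hx]; exact h)
        simpa using congrArg (fun z : D => z.down.1) this
      have hyne : y ≠ ⊥ := by
        intro h
        have : (⟨(false, true, false)⟩ : D) = ⊥ := hu (by rw [map_bot, ← hy]; exact h)
        simpa using congrArg (fun z : D => z.down.2.1) this
      have hxb : x = b := by
        have hxle : x ≤ b := hsup ▸ le_sup_left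
        rcases hb.le_iff.mp hxle with h | h
        · exact absurd h hxne
        · exact h
      have hyb : y = b := by
        have hyle : y ≤ b := hsup ▸ le_sup_right
        rcases hb.le_iff.mp hyle with h | h
        · exact absurd h hyne
        · exact h
      apply hbne
      rw [← hinf, hxb, hyb, inf_idem]
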